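/- Let $p \ge 2$, $1 \le r \le p-1$, and $K > 0$. There is a constant $C$ such that for all $R \ge 2$ and all integers $w \ge 2$, the number of pairs $({\boldsymbol i}, {\boldsymbol i}')$ of tuples in $\mathcal{H} = \{(i_1,\dots,i_p)\in\mathbb{N}^p : i_1 < \cdots < i_p \le w,\ i_1\cdots i_p \le KR\}$ sharing exactly $r$ common components is at most $C\, R\, w^{p-r} (\log R)^{r-1}$. -/

import Mathlib

open Finset

lemma sum_inv_le (n : ℕ) : ∑ a ∈ Finset.Icc 1 n, (1 / (a:ℝ)) ≤ 1 + Real.log n := by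
  induction n with
  | zero => simp
  | succ n ih =>
    rcases Nat.eq_zero_or_pos n with h | h
    · subst h; simp
    · rw [Finset.sum_Icc_succ_top (by omega)]
      have hn : (0:ℝ) < n := by exact_mod_cast h
      have hlog : Real.log ((n:ℝ)/(n+1)) ≤ (n:ℝ)/(n+1) - 1 :=
        Real.log_le_sub_one_of_pos (by positivity)
      rw [Real.log_div (by positivity) (by positivity)] at hlog
      have h1 : (1:ℝ)/(n+1) ≤ Real.log ((n:ℕ)+1) - Real.log n := by
        have : (n:ℝ)/(n+1) - 1 = -(1/(n+1)) := by field_simp; ring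
        rw [this] at hlog
        push_cast
        linarith
      push_cast
      push_cast at ih
      linarith

lemma sum_rsqrt (w : ℕ) : ∑ e ∈ Finset.Icc 1 w, (1 / Real.sqrt e) ≤ 2 * Real.sqrt w := by
  induction w with
  | zero => simp
  | succ w ih =>
    rw [Finset.sum_Icc_succ_top (by omega)]
    have ha : (0:ℝ) ≤ Real.sqrt w := Real.sqrt_nonneg _
    have hb : (0:ℝ) < Real.sqrt (w+1) := Real.sqrt_pos.2 (by positivity)
    have ha2 : Real.sqrt w ^ 2 = w := Real.sq_sqrt (by positivity)
    have hb2 : Real.sqrt (w+1) ^ 2 = (w:ℝ)+1 := Real.sq_sqrt (by positivity)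
    have key : 1 / Real.sqrt ((w:ℝ)+1) ≤ 2 * (Real.sqrt (w+1) - Real.sqrt w) := by
      rw [div_le_iff₀ hb]
      nlinarith [sq_nonneg (Real.sqrt (w+1) - Real.sqrt w)]
    have : ((w:ℝ)+1) = ((w+1:ℕ):ℝ) := by push_cast; ring
    push_cast
    linarith [key]

/-- number of `k`-tuples with entries in `[1,M]` and product at most `Y`. -/
noncomputable def dcount (k M : ℕ) (Y : ℝ) : ℕ :=
  ((Fintype.piFinset fun _ : Fin k => Finset.Icc 1 M).filter
    (fun f => (∏ j, (f j : ℝ)) ≤ Y)).card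

lemma dcount_step (k M : ℕ) (Y : ℝ) :
    dcount (k+1) M Y ≤ ∑ a ∈ Finset.Icc 1 (min M ⌊Y⌋₊), dcount k M (Y / a) := by
  classical
  simp only [dcount]
  rw [← Finset.card_sigma]
  apply Finset.card_le_card_of_injOn
    (fun (f : Fin (k+1) → ℕ) => (⟨f 0, fun j : Fin k => f j.succ⟩ : (a : ℕ) × (Fin k → ℕ)))
  · intro f hf
    simp only [Finset.mem_coe, Finset.mem_filter, Fintype.mem_piFinset, Finset.mem_Icc] at hf
    obtain ⟨hf1, hf2⟩ := hf
    have h0pos : 1 ≤ f 0 := (hf1 0).1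
    have h0posR : (0:ℝ) < f 0 := by exact_mod_cast Nat.lt_of_lt_of_le Nat.zero_lt_one h0pos
    have hsplit : (∏ j, (f j : ℝ)) = (f 0 : ℝ) * ∏ j : Fin k, (f j.succ : ℝ) :=
      Fin.prod_univ_succ _
    have htail1 : (1:ℝ) ≤ ∏ j : Fin k, (f j.succ : ℝ) := by
      have h := Finset.prod_le_prod (s := Finset.univ) (f := fun _ : Fin k => (1:ℝ))
        (g := fun j : Fin k => (f j.succ : ℝ)) (fun _ _ => zero_le_one)
        (fun j _ => by show (1:ℝ) ≤ (f j.succ : ℝ); exact_mod_cast (hf1 j.succ).1)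
      simpa using h
    have hf0Y : (f 0 : ℝ) ≤ Y := by
      calc (f 0 : ℝ) ≤ (f 0 : ℝ) * ∏ j : Fin k, (f j.succ : ℝ) :=
            le_mul_of_one_le_right (le_of_lt h0posR) htail1
        _ ≤ Y := by rw [← hsplit]; exact hf2
    refine Finset.mem_coe.2 (Finset.mem_sigma.2 ⟨Finset.mem_Icc.2 ⟨h0pos, le_min (hf1 0).2 (Nat.le_floor hf0Y)⟩, ?_⟩)
    simp only [Finset.mem_filter, Fintype.mem_piFinset, Finset.mem_Icc]
    refine ⟨fun j => hf1 j.succ, ?_⟩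
    rw [le_div_iff₀ h0posR, mul_comm, ← hsplit]
    exact hf2
  · intro f hf g hg h
    simp only [Sigma.mk.inj_iff, heq_eq_eq] at h
    funext j
    refine Fin.cases h.1 (fun i => ?_) j
    exact congrFun h.2 i

lemma dcount_zero_le (M : ℕ) (Y : ℝ) : dcount 0 M Y ≤ 1 := by
  unfold dcount
  calc _ ≤ (Fintype.piFinset fun _ : Fin 0 => Finset.Icc 1 M).card := Finset.card_filter_le _ _
    _ = 1 := by simp

lemma dcount_succ_le (M : ℕ) : ∀ (k : ℕ) (Y : ℝ), 1 ≤ Y →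
    (dcount (k+1) M Y : ℝ) ≤ Y * (1 + Real.log Y) ^ k := by
  intro k
  induction k with
  | zero =>
    intro Y hY
    have h1 : dcount 1 M Y ≤ ∑ a ∈ Finset.Icc 1 (min M ⌊Y⌋₊), dcount 0 M (Y / a) :=
      dcount_step 0 M Y
    have h2 : ∑ a ∈ Finset.Icc 1 (min M ⌊Y⌋₊), dcount 0 M (Y / a)
        ≤ ∑ a ∈ Finset.Icc 1 (min M ⌊Y⌋₊), 1 :=
      Finset.sum_le_sum fun a _ => dcount_zero_le M _
    have h3 : (∑ a ∈ Finset.Icc 1 (min M ⌊Y⌋₊), 1) = min M ⌊Y⌋₊ := by simp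
    have h4 : ((min M ⌊Y⌋₊ : ℕ) : ℝ) ≤ Y := by
      calc ((min M ⌊Y⌋₊ : ℕ) : ℝ) ≤ (⌊Y⌋₊ : ℝ) := by exact_mod_cast min_le_right _ _
        _ ≤ Y := Nat.floor_le (by linarith)
    simp only [pow_zero, mul_one]
    calc (dcount 1 M Y : ℝ) ≤ ((min M ⌊Y⌋₊ : ℕ) : ℝ) := by
          exact_mod_cast le_trans h1 (le_trans h2 (le_of_eq h3))
      _ ≤ Y := h4
  | succ k ih =>
    intro Y hY
    have hY0 : (0:ℝ) < Y := by linarith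
    have hstep := dcount_step (k+1) M Y
    have hcast : (dcount (k+2) M Y : ℝ) ≤ ∑ a ∈ Finset.Icc 1 (min M ⌊Y⌋₊), (dcount (k+1) M (Y/a) : ℝ) := by
      exact_mod_cast hstep
    have hterm : ∀ a ∈ Finset.Icc 1 (min M ⌊Y⌋₊),
        (dcount (k+1) M (Y/a) : ℝ) ≤ (Y / a) * (1 + Real.log Y) ^ k := by
      intro a ha
      rw [Finset.mem_Icc] at ha
      have haR : (1:ℝ) ≤ (a:ℝ) := by exact_mod_cast ha.1
      have haY : (a:ℝ) ≤ Y :=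
        le_trans (by exact_mod_cast le_trans ha.2 (min_le_right _ _) : (a:ℝ) ≤ (⌊Y⌋₊:ℝ))
          (Nat.floor_le (le_of_lt hY0))
      have hYa : 1 ≤ Y / a := (one_le_div (by linarith)).2 haY
      have h1 := ih (Y/a) hYa
      have hlog : Real.log (Y/a) ≤ Real.log Y :=
        Real.log_le_log (by linarith) (by
          rw [div_le_iff₀ (by linarith : (0:ℝ) < (a:ℝ))]
          exact le_mul_of_one_le_right (le_of_lt hY0) haR)
      have hb : (0:ℝ) ≤ 1 + Real.log (Y/a) := by
        have := Real.log_nonneg hYa; linarith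
      calc (dcount (k+1) M (Y/a) : ℝ) ≤ (Y/a) * (1 + Real.log (Y/a)) ^ k := h1
        _ ≤ (Y/a) * (1 + Real.log Y) ^ k := by
            apply mul_le_mul_of_nonneg_left (pow_le_pow_left₀ hb (by linarith) k)
            positivity
    have hsum : ∑ a ∈ Finset.Icc 1 (min M ⌊Y⌋₊), (Y / a) * (1 + Real.log Y) ^ k
        = Y * (1 + Real.log Y) ^ k * ∑ a ∈ Finset.Icc 1 (min M ⌊Y⌋₊), (1 / (a:ℝ)) := by
      rw [Finset.mul_sum]
      apply Finset.sum_congr rfl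
      intro a _
      ring
    have hharm : ∑ a ∈ Finset.Icc 1 (min M ⌊Y⌋₊), (1 / (a:ℝ)) ≤ 1 + Real.log Y := by
      refine le_trans (sum_inv_le _) ?_
      have : Real.log ((min M ⌊Y⌋₊ : ℕ) : ℝ) ≤ Real.log Y := by
        rcases Nat.eq_zero_or_pos (min M ⌊Y⌋₊) with h | h
        · rw [h]; simpa using Real.log_nonneg hY
        · apply Real.log_le_log (by exact_mod_cast h)
          calc ((min M ⌊Y⌋₊ : ℕ) : ℝ) ≤ (⌊Y⌋₊ : ℝ) := by exact_mod_cast min_le_right _ _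
            _ ≤ Y := Nat.floor_le (le_of_lt hY0)
      linarith
    have hnn : (0:ℝ) ≤ Y * (1 + Real.log Y) ^ k := by
      have := Real.log_nonneg hY; positivity
    calc (dcount (k+2) M Y : ℝ) ≤ ∑ a ∈ Finset.Icc 1 (min M ⌊Y⌋₊), (dcount (k+1) M (Y/a) : ℝ) := hcast
      _ ≤ ∑ a ∈ Finset.Icc 1 (min M ⌊Y⌋₊), (Y / a) * (1 + Real.log Y) ^ k :=
          Finset.sum_le_sum hterm
      _ = Y * (1 + Real.log Y) ^ k * ∑ a ∈ Finset.Icc 1 (min M ⌊Y⌋₊), (1 / (a:ℝ)) := hsum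
      _ ≤ Y * (1 + Real.log Y) ^ k * (1 + Real.log Y) := by
          exact mul_le_mul_of_nonneg_left hharm hnn
      _ = Y * (1 + Real.log Y) ^ (k+1) := by ring

lemma dcount_le (k M : ℕ) (Y : ℝ) (hY : 1 ≤ Y) :
    (dcount k M Y : ℝ) ≤ Y * (1 + Real.log Y) ^ (k - 1) := by
  cases k with
  | zero =>
    simp only [Nat.zero_sub, pow_zero, mul_one]
    calc (dcount 0 M Y : ℝ) ≤ 1 := by exact_mod_cast dcount_zero_le M Y
      _ ≤ Y := hY
  | succ n => simpa using dcount_succ_le M n Y hY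

lemma sqrt_prod {ι : Type*} (s : Finset ι) (f : ι → ℝ) (h : ∀ i ∈ s, 0 ≤ f i) :
    Real.sqrt (∏ i ∈ s, f i) = ∏ i ∈ s, Real.sqrt (f i) := by
  induction s using Finset.cons_induction with
  | empty => simp
  | cons a s ha ih =>
    rw [Finset.prod_cons, Finset.prod_cons, Real.sqrt_mul (h a (Finset.mem_cons_self a s)),
      ih (fun i hi => h i (Finset.mem_cons_of_mem hi))]

/-- The target data finset for the pair-counting injection. -/
noncomputable def Ufin (p r w : ℕ) (K R : ℝ) :
    Finset ((Fin r → ℕ) × (Fin (p-r) → ℕ) × (Fin (p-r) → ℕ)) :=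
  ((Fintype.piFinset fun _ : Fin r => Finset.Icc 1 w) ×ˢ
   (Fintype.piFinset fun _ : Fin (p-r) => Finset.Icc 1 w) ×ˢ
   (Fintype.piFinset fun _ : Fin (p-r) => Finset.Icc 1 w)).filter
  (fun t => (∏ j, (t.1 j : ℝ))^2 * ((∏ j, (t.2.1 j : ℝ)) * (∏ j, (t.2.2 j : ℝ))) ≤ (K*R)^2)

lemma image_orderEmbOfFin (s : Finset ℕ) {k : ℕ} (h : s.card = k) :
    Finset.image (fun j => s.orderEmbOfFin h j) Finset.univ = s := by
  apply Finset.coe_injective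
  rw [Finset.coe_image, Finset.coe_univ, Set.image_univ]
  exact Finset.range_orderEmbOfFin s h

lemma prod_orderEmbOfFin (s : Finset ℕ) {k : ℕ} (h : s.card = k) :
    (∏ j, ((s.orderEmbOfFin h j : ℕ) : ℝ)) = ∏ x ∈ s, (x : ℝ) := by
  conv_rhs => rw [← image_orderEmbOfFin s h]
  rw [Finset.prod_image (fun a _ b _ hab => (s.orderEmbOfFin h).injective hab)]

lemma stepI (p r w : ℕ) (K R : ℝ) (hKR : 0 ≤ K * R) :
    (Nat.card {q : (Fin p → ℕ) × (Fin p → ℕ) //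
        StrictMono q.1 ∧ StrictMono q.2 ∧
        (∀ j, 0 < q.1 j ∧ q.1 j ≤ w) ∧ (∀ j, 0 < q.2 j ∧ q.2 j ≤ w) ∧
        (∏ j, (q.1 j : ℝ)) ≤ K * R ∧ (∏ j, (q.2 j : ℝ)) ≤ K * R ∧
        (Set.range q.1 ∩ Set.range q.2).ncard = r}) ≤ (Ufin p r w K R).card := by
  classical
  set T := {q : (Fin p → ℕ) × (Fin p → ℕ) //
        StrictMono q.1 ∧ StrictMono q.2 ∧
        (∀ j, 0 < q.1 j ∧ q.1 j ≤ w) ∧ (∀ j, 0 < q.2 j ∧ q.2 j ≤ w) ∧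
        (∏ j, (q.1 j : ℝ)) ≤ K * R ∧ (∏ j, (q.2 j : ℝ)) ≤ K * R ∧
        (Set.range q.1 ∩ Set.range q.2).ncard = r} with hT
  -- basic data
  have hA : ∀ x : T, (Finset.image x.1.1 Finset.univ).card = p := fun x => by
    rw [Finset.card_image_of_injective _ x.2.1.injective, Finset.card_univ, Fintype.card_fin]
  have hB : ∀ x : T, (Finset.image x.1.2 Finset.univ).card = p := fun x => by
    rw [Finset.card_image_of_injective _ x.2.2.1.injective, Finset.card_univ, Fintype.card_fin]
  have hC : ∀ x : T,
      ((Finset.image x.1.1 Finset.univ) ∩ (Finset.image x.1.2 Finset.univ)).card = r := fun x => by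
    have hco : (((Finset.image x.1.1 Finset.univ) ∩ (Finset.image x.1.2 Finset.univ) : Finset ℕ) :
        Set ℕ) = Set.range x.1.1 ∩ Set.range x.1.2 := by
      rw [Finset.coe_inter, Finset.coe_image, Finset.coe_image, Finset.coe_univ,
        Set.image_univ, Set.image_univ]
    have h2 := x.2.2.2.2.2.2.2
    rw [← Set.ncard_coe_finset, hco]
    exact h2
  have hD : ∀ x : T,
      ((Finset.image x.1.1 Finset.univ) \ (Finset.image x.1.2 Finset.univ)).card = p - r :=
    fun x => by
      have h1 := Finset.card_sdiff_add_card_inter (Finset.image x.1.1 Finset.univ)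
        (Finset.image x.1.2 Finset.univ)
      rw [hA x, hC x] at h1
      omega
  have hE : ∀ x : T,
      ((Finset.image x.1.2 Finset.univ) \ (Finset.image x.1.1 Finset.univ)).card = p - r :=
    fun x => by
      have h1 := Finset.card_sdiff_add_card_inter (Finset.image x.1.2 Finset.univ)
        (Finset.image x.1.1 Finset.univ)
      rw [hB x, Finset.inter_comm, hC x] at h1
      omega
  set Φ : T → ((Fin r → ℕ) × (Fin (p-r) → ℕ) × (Fin (p-r) → ℕ)) := fun x =>
    (fun j => ((Finset.image x.1.1 Finset.univ) ∩ (Finset.image x.1.2 Finset.univ)).orderEmbOfFin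
        (hC x) j,
     fun j => ((Finset.image x.1.1 Finset.univ) \ (Finset.image x.1.2 Finset.univ)).orderEmbOfFin
        (hD x) j,
     fun j => ((Finset.image x.1.2 Finset.univ) \ (Finset.image x.1.1 Finset.univ)).orderEmbOfFin
        (hE x) j) with hΦ
  have hmem : ∀ x : T, Φ x ∈ Ufin p r w K R := by
    intro x
    obtain ⟨h1, h2, hb1, hb2, hp1, hp2, hcap⟩ := x.2
    set Af := Finset.image x.1.1 Finset.univ
    set Bf := Finset.image x.1.2 Finset.univ
    have hmemA : ∀ a ∈ Af, a ∈ Finset.Icc 1 w := by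
      intro a ha
      obtain ⟨j, _, rfl⟩ := Finset.mem_image.1 ha
      exact Finset.mem_Icc.2 ⟨(hb1 j).1, (hb1 j).2⟩
    have hmemB : ∀ a ∈ Bf, a ∈ Finset.Icc 1 w := by
      intro a ha
      obtain ⟨j, _, rfl⟩ := Finset.mem_image.1 ha
      exact Finset.mem_Icc.2 ⟨(hb2 j).1, (hb2 j).2⟩
    -- the three products as finset products
    have hPC : (∏ j, ((Φ x).1 j : ℝ)) = ∏ a ∈ Af ∩ Bf, (a : ℝ) := prod_orderEmbOfFin _ _
    have hPD : (∏ j, ((Φ x).2.1 j : ℝ)) = ∏ a ∈ Af \ Bf, (a : ℝ) := prod_orderEmbOfFin _ _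
    have hPE : (∏ j, ((Φ x).2.2 j : ℝ)) = ∏ a ∈ Bf \ Af, (a : ℝ) := prod_orderEmbOfFin _ _
    have hdisjA : Disjoint (Af \ Bf) (Af ∩ Bf) := Finset.disjoint_sdiff_inter Af Bf
    have hdisjB : Disjoint (Bf \ Af) (Bf ∩ Af) := Finset.disjoint_sdiff_inter Bf Af
    have hprodA : (∏ a ∈ Af \ Bf, (a:ℝ)) * (∏ a ∈ Af ∩ Bf, (a:ℝ)) ≤ K * R := by
      rw [← Finset.prod_union hdisjA, Finset.sdiff_union_inter]
      calc (∏ a ∈ Af, (a:ℝ)) = ∏ j, (x.1.1 j : ℝ) := by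
            rw [← Finset.prod_image (f := fun a : ℕ => (a:ℝ))
              (fun a _ b _ hab => h1.injective hab)]
        _ ≤ K * R := hp1
    have hprodB : (∏ a ∈ Bf \ Af, (a:ℝ)) * (∏ a ∈ Bf ∩ Af, (a:ℝ)) ≤ K * R := by
      rw [← Finset.prod_union hdisjB, Finset.sdiff_union_inter]
      calc (∏ a ∈ Bf, (a:ℝ)) = ∏ j, (x.1.2 j : ℝ) := by
            rw [← Finset.prod_image (f := fun a : ℕ => (a:ℝ))
              (fun a _ b _ hab => h2.injective hab)]
        _ ≤ K * R := hp2
    have hposC : (0:ℝ) ≤ ∏ a ∈ Af ∩ Bf, (a:ℝ) := Finset.prod_nonneg fun a _ => by positivity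
    have hposD : (0:ℝ) ≤ ∏ a ∈ Af \ Bf, (a:ℝ) := Finset.prod_nonneg fun a _ => by positivity
    have hposE : (0:ℝ) ≤ ∏ a ∈ Bf \ Af, (a:ℝ) := Finset.prod_nonneg fun a _ => by positivity
    rw [Ufin, Finset.mem_filter]
    constructor
    · rw [Finset.mem_product]
      refine ⟨?_, ?_⟩
      · rw [Fintype.mem_piFinset]
        intro j
        exact hmemA _ (Finset.mem_of_mem_inter_left (Finset.orderEmbOfFin_mem _ (hC x) j))
      · rw [Finset.mem_product]
        constructor
        · rw [Fintype.mem_piFinset]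
          intro j
          exact hmemA _ (Finset.mem_sdiff.1 (Finset.orderEmbOfFin_mem _ (hD x) j)).1
        · rw [Fintype.mem_piFinset]
          intro j
          exact hmemB _ (Finset.mem_sdiff.1 (Finset.orderEmbOfFin_mem _ (hE x) j)).1
    · rw [hPC, hPD, hPE]
      have : (∏ a ∈ Af ∩ Bf, (a:ℝ))^2 * ((∏ a ∈ Af \ Bf, (a:ℝ)) * (∏ a ∈ Bf \ Af, (a:ℝ)))
          = ((∏ a ∈ Af \ Bf, (a:ℝ)) * (∏ a ∈ Af ∩ Bf, (a:ℝ))) *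
            ((∏ a ∈ Bf \ Af, (a:ℝ)) * (∏ a ∈ Bf ∩ Af, (a:ℝ))) := by
        rw [Finset.inter_comm Bf Af]; ring
      rw [this, sq]
      exact mul_le_mul hprodA hprodB (by positivity) (by
        exact le_trans (mul_nonneg hposD hposC) hprodA |>.trans (le_refl _) |> fun _ => hKR) 
  have hinj : Function.Injective Φ := by
    intro x y hxy
    have h1 : (Φ x).1 = (Φ y).1 := congrArg Prod.fst hxy
    have h2 : (Φ x).2.1 = (Φ y).2.1 := congrArg (fun t => t.2.1) hxy
    have h3 : (Φ x).2.2 = (Φ y).2.2 := congrArg (fun t => t.2.2) hxy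
    simp only [hΦ] at h1 h2 h3
    have hCf : (Finset.image x.1.1 Finset.univ) ∩ (Finset.image x.1.2 Finset.univ)
        = (Finset.image y.1.1 Finset.univ) ∩ (Finset.image y.1.2 Finset.univ) := by
      conv_lhs => rw [← image_orderEmbOfFin _ (hC x)]
      conv_rhs => rw [← image_orderEmbOfFin _ (hC y)]
      rw [h1]
    have hDf : (Finset.image x.1.1 Finset.univ) \ (Finset.image x.1.2 Finset.univ)
        = (Finset.image y.1.1 Finset.univ) \ (Finset.image y.1.2 Finset.univ) := by
      conv_lhs => rw [← image_orderEmbOfFin _ (hD x)]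
      conv_rhs => rw [← image_orderEmbOfFin _ (hD y)]
      rw [h2]
    have hEf : (Finset.image x.1.2 Finset.univ) \ (Finset.image x.1.1 Finset.univ)
        = (Finset.image y.1.2 Finset.univ) \ (Finset.image y.1.1 Finset.univ) := by
      conv_lhs => rw [← image_orderEmbOfFin _ (hE x)]
      conv_rhs => rw [← image_orderEmbOfFin _ (hE y)]
      rw [h3]
    have hAf : Finset.image x.1.1 Finset.univ = Finset.image y.1.1 Finset.univ := by
      calc Finset.image x.1.1 Finset.univ
          = (Finset.image x.1.1 Finset.univ \ Finset.image x.1.2 Finset.univ)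
            ∪ (Finset.image x.1.1 Finset.univ ∩ Finset.image x.1.2 Finset.univ) :=
            (Finset.sdiff_union_inter _ _).symm
        _ = (Finset.image y.1.1 Finset.univ \ Finset.image y.1.2 Finset.univ)
            ∪ (Finset.image y.1.1 Finset.univ ∩ Finset.image y.1.2 Finset.univ) := by
            rw [hCf, hDf]
        _ = Finset.image y.1.1 Finset.univ := Finset.sdiff_union_inter _ _
    have hBf : Finset.image x.1.2 Finset.univ = Finset.image y.1.2 Finset.univ := by
      calc Finset.image x.1.2 Finset.univ
          = (Finset.image x.1.2 Finset.univ \ Finset.image x.1.1 Finset.univ)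
            ∪ (Finset.image x.1.2 Finset.univ ∩ Finset.image x.1.1 Finset.univ) :=
            (Finset.sdiff_union_inter _ _).symm
        _ = (Finset.image y.1.2 Finset.univ \ Finset.image y.1.1 Finset.univ)
            ∪ (Finset.image y.1.2 Finset.univ ∩ Finset.image y.1.1 Finset.univ) := by
            rw [hEf, Finset.inter_comm, hCf, Finset.inter_comm]
        _ = Finset.image y.1.2 Finset.univ := Finset.sdiff_union_inter _ _
    have e1 : x.1.1 = ⇑((Finset.image y.1.1 Finset.univ).orderEmbOfFin (hA y)) :=
      Finset.orderEmbOfFin_unique (hA y)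
        (fun j => hAf ▸ Finset.mem_image_of_mem _ (Finset.mem_univ j)) x.2.1
    have e2 : y.1.1 = ⇑((Finset.image y.1.1 Finset.univ).orderEmbOfFin (hA y)) :=
      Finset.orderEmbOfFin_unique (hA y)
        (fun j => Finset.mem_image_of_mem _ (Finset.mem_univ j)) y.2.1
    have e3 : x.1.2 = ⇑((Finset.image y.1.2 Finset.univ).orderEmbOfFin (hB y)) :=
      Finset.orderEmbOfFin_unique (hB y)
        (fun j => hBf ▸ Finset.mem_image_of_mem _ (Finset.mem_univ j)) x.2.2.1
    have e4 : y.1.2 = ⇑((Finset.image y.1.2 Finset.univ).orderEmbOfFin (hB y)) :=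
      Finset.orderEmbOfFin_unique (hB y)
        (fun j => Finset.mem_image_of_mem _ (Finset.mem_univ j)) y.2.2.1
    apply Subtype.ext
    apply Prod.ext
    · exact e1.trans e2.symm
    · exact e3.trans e4.symm
  calc Nat.card T ≤ Nat.card ↥(Ufin p r w K R) :=
        Nat.card_le_card_of_injective
          (fun x => (⟨Φ x, hmem x⟩ : ↥(Ufin p r w K R)))
          (fun a b hab => hinj (congrArg Subtype.val hab))
    _ = (Ufin p r w K R).card := Nat.card_eq_finsetCard _

lemma stepII (p r w : ℕ) (K R : ℝ) :
    (Ufin p r w K R).card ≤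
      ∑ b ∈ (Fintype.piFinset fun _ : Fin (p-r) => Finset.Icc 1 w) ×ˢ
             (Fintype.piFinset fun _ : Fin (p-r) => Finset.Icc 1 w),
        ((Fintype.piFinset fun _ : Fin r => Finset.Icc 1 w).filter
          (fun f => (∏ j, (f j : ℝ))^2 * ((∏ j, (b.1 j : ℝ)) * (∏ j, (b.2 j : ℝ)))
            ≤ (K*R)^2)).card := by
  classical
  rw [← Finset.card_sigma]
  apply Finset.card_le_card_of_injOn
    (fun t : (Fin r → ℕ) × (Fin (p-r) → ℕ) × (Fin (p-r) → ℕ) =>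
      (⟨(t.2.1, t.2.2), t.1⟩ :
        (b : (Fin (p-r) → ℕ) × (Fin (p-r) → ℕ)) × (Fin r → ℕ)))
  · intro t ht
    rw [Finset.mem_coe, Ufin, Finset.mem_filter, Finset.mem_product] at ht
    obtain ⟨⟨ht1, ht2⟩, htc⟩ := ht
    rw [Finset.mem_product] at ht2
    refine Finset.mem_coe.2 (Finset.mem_sigma.2 ⟨Finset.mem_product.2 ⟨ht2.1, ht2.2⟩, ?_⟩)
    rw [Finset.mem_filter]
    exact ⟨ht1, htc⟩
  · intro a ha b hb h
    simp only [Sigma.mk.inj_iff, heq_eq_eq, Prod.mk.injEq] at h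
    obtain ⟨⟨h1, h2⟩, h3⟩ := h
    exact Prod.ext h3 (Prod.ext h1 h2)

lemma inner_bound (r w : ℕ) (K R : ℝ) (hKR : 0 < K * R) (Pb : ℝ) (hPb : 1 ≤ Pb) :
    (((Fintype.piFinset fun _ : Fin r => Finset.Icc 1 w).filter
        (fun f => (∏ j, (f j : ℝ))^2 * Pb ≤ (K*R)^2)).card : ℝ)
      ≤ (K * R / Real.sqrt Pb) * (1 + Real.log (max 1 (K*R))) ^ (r - 1) := by
  classical
  set Y := K * R / Real.sqrt Pb with hY
  set L := 1 + Real.log (max 1 (K*R)) with hL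
  have hsq : (0:ℝ) < Real.sqrt Pb := Real.sqrt_pos.2 (by linarith)
  have hsq1 : (1:ℝ) ≤ Real.sqrt Pb := by
    rw [show (1:ℝ) = Real.sqrt 1 by simp]
    exact Real.sqrt_le_sqrt hPb
  have hYpos : 0 < Y := div_pos hKR hsq
  have hYle : Y ≤ K * R := div_le_self (le_of_lt hKR) hsq1
  have hLone : (1:ℝ) ≤ L := by
    have : 0 ≤ Real.log (max 1 (K*R)) := Real.log_nonneg (le_max_left _ _)
    linarith
  have hsub : ((Fintype.piFinset fun _ : Fin r => Finset.Icc 1 w).filter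
        (fun f => (∏ j, (f j : ℝ))^2 * Pb ≤ (K*R)^2)) ⊆
      ((Fintype.piFinset fun _ : Fin r => Finset.Icc 1 w).filter
        (fun f => (∏ j, (f j : ℝ)) ≤ Y)) := by
    intro f hf
    rw [Finset.mem_filter] at hf ⊢
    obtain ⟨hf1, hf2⟩ := hf
    refine ⟨hf1, ?_⟩
    have hfpos : (0:ℝ) ≤ ∏ j, (f j : ℝ) := Finset.prod_nonneg fun j _ => by positivity
    rw [hY, le_div_iff₀ hsq]
    have key : ((∏ j, (f j : ℝ)) * Real.sqrt Pb)^2 ≤ (K*R)^2 := by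
      rw [mul_pow, Real.sq_sqrt (by linarith : (0:ℝ) ≤ Pb)]
      exact hf2
    calc (∏ j, (f j : ℝ)) * Real.sqrt Pb
        = Real.sqrt (((∏ j, (f j : ℝ)) * Real.sqrt Pb)^2) :=
          (Real.sqrt_sq (by positivity)).symm
      _ ≤ Real.sqrt ((K*R)^2) := Real.sqrt_le_sqrt key
      _ = K * R := Real.sqrt_sq (le_of_lt hKR)
  have hcard : (((Fintype.piFinset fun _ : Fin r => Finset.Icc 1 w).filter
        (fun f => (∏ j, (f j : ℝ))^2 * Pb ≤ (K*R)^2)).card : ℝ) ≤ (dcount r w Y : ℝ) := by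
    have hd : dcount r w Y = ((Fintype.piFinset fun _ : Fin r => Finset.Icc 1 w).filter
        (fun f => (∏ j, (f j : ℝ)) ≤ Y)).card := rfl
    rw [hd]
    exact Nat.cast_le.2 (Finset.card_le_card hsub)
  by_cases h1Y : 1 ≤ Y
  · refine le_trans hcard (le_trans (dcount_le r w Y h1Y) ?_)
    have hlog : 1 + Real.log Y ≤ L := by
      rw [hL]
      have : Real.log Y ≤ Real.log (max 1 (K*R)) :=
        Real.log_le_log hYpos (le_trans hYle (le_max_right _ _))
      linarith
    have hpow : (1 + Real.log Y) ^ (r-1) ≤ L ^ (r-1) :=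
      pow_le_pow_left₀ (by have := Real.log_nonneg h1Y; linarith) hlog _
    exact mul_le_mul_of_nonneg_left hpow (le_of_lt hYpos)
  · have hempty : ((Fintype.piFinset fun _ : Fin r => Finset.Icc 1 w).filter
        (fun f => (∏ j, (f j : ℝ))^2 * Pb ≤ (K*R)^2)).card = 0 := by
      rw [Finset.card_eq_zero]
      apply Finset.eq_empty_of_forall_notMem
      intro f hf
      have hmem := hsub hf
      rw [Finset.mem_filter] at hmem
      have hge1 : (1:ℝ) ≤ ∏ j, (f j : ℝ) := by
        have h := Finset.prod_le_prod (s := Finset.univ) (f := fun _ : Fin r => (1:ℝ))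
          (g := fun j : Fin r => (f j : ℝ)) (fun _ _ => zero_le_one)
          (fun j _ => by
            show (1:ℝ) ≤ (f j : ℝ)
            rw [Finset.mem_filter, Fintype.mem_piFinset] at hf
            exact_mod_cast (Finset.mem_Icc.1 (hf.1 j)).1)
        simpa using h
      exact h1Y (le_trans hge1 hmem.2)
    rw [hempty]
    push_cast
    positivity

lemma one_le_prod_cast {k : ℕ} {g : Fin k → ℕ} (hg : ∀ j, 1 ≤ g j) :
    (1:ℝ) ≤ ∏ j, (g j : ℝ) := by
  have h := Finset.prod_le_prod (s := Finset.univ) (f := fun _ : Fin k => (1:ℝ))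
    (g := fun j : Fin k => (g j : ℝ)) (fun _ _ => zero_le_one)
    (fun j _ => by show (1:ℝ) ≤ (g j : ℝ); exact_mod_cast hg j)
  simpa using h

/-- Counting bound: the number of pairs of increasing `p`-tuples with components
in `[1,w]`, product at most `K·R`, sharing exactly `r` common components, is at
most `C R w^{p-r} (log R)^{r-1}`. -/
theorem pair_count_bound_lin (p r : ℕ) (hp : 2 ≤ p) (hr1 : 1 ≤ r)
    (hr2 : r ≤ p - 1) (K : ℝ) (hK : 0 < K) :
    ∃ C : ℝ, 0 < C ∧ ∀ R : ℝ, 2 ≤ R → ∀ w : ℕ, 2 ≤ w →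
      (Nat.card {q : (Fin p → ℕ) × (Fin p → ℕ) //
          StrictMono q.1 ∧ StrictMono q.2 ∧
          (∀ j, 0 < q.1 j ∧ q.1 j ≤ w) ∧ (∀ j, 0 < q.2 j ∧ q.2 j ≤ w) ∧
          (∏ j, (q.1 j : ℝ)) ≤ K * R ∧ (∏ j, (q.2 j : ℝ)) ≤ K * R ∧
          (Set.range q.1 ∩ Set.range q.2).ncard = r} : ℝ)
        ≤ C * R * (w : ℝ) ^ (p - r) * (Real.log R) ^ (r - 1) := by
  classical
  have hlog2 : (0:ℝ) < Real.log 2 := Real.log_pos one_lt_two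
  set cK := (1 + |Real.log K|)/Real.log 2 + 1 with hcK
  have hcK0 : 0 < cK := by positivity
  refine ⟨4^(p-r) * K * cK^(r-1), by positivity, ?_⟩
  intro R hR w hw
  set m := p - r with hm
  have hKR : (0:ℝ) < K * R := by nlinarith
  set L := 1 + Real.log (max 1 (K*R)) with hL
  have hLone : (1:ℝ) ≤ L := by
    have : 0 ≤ Real.log (max 1 (K*R)) := Real.log_nonneg (le_max_left _ _)
    rw [hL]; linarith
  have hlogR : Real.log 2 ≤ Real.log R := Real.log_le_log two_pos hR
  have hlogRpos : 0 < Real.log R := lt_of_lt_of_le hlog2 hlogR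
  have hLcK : L ≤ cK * Real.log R := by
    have h1 : Real.log (max 1 (K*R)) ≤ |Real.log K| + Real.log R := by
      rcases le_total (K*R) 1 with h | h
      · rw [max_eq_left h, Real.log_one]
        have := abs_nonneg (Real.log K)
        linarith
      · rw [max_eq_right h, Real.log_mul (ne_of_gt hK) (by linarith)]
        have := le_abs_self (Real.log K)
        linarith
    have h2 : (1 + |Real.log K|) ≤ ((1 + |Real.log K|)/Real.log 2) * Real.log R := by
      rw [div_mul_eq_mul_div, le_div_iff₀ hlog2]
      exact mul_le_mul_of_nonneg_left hlogR (by positivity)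
    calc L = 1 + Real.log (max 1 (K*R)) := hL
      _ ≤ 1 + |Real.log K| + Real.log R := by linarith
      _ ≤ ((1 + |Real.log K|)/Real.log 2) * Real.log R + 1 * Real.log R := by linarith
      _ = cK * Real.log R := by rw [hcK]; ring
  set Bset := Fintype.piFinset fun _ : Fin m => Finset.Icc 1 w with hBset
  -- step 1 and 2
  have s1 : (Nat.card {q : (Fin p → ℕ) × (Fin p → ℕ) //
          StrictMono q.1 ∧ StrictMono q.2 ∧
          (∀ j, 0 < q.1 j ∧ q.1 j ≤ w) ∧ (∀ j, 0 < q.2 j ∧ q.2 j ≤ w) ∧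
          (∏ j, (q.1 j : ℝ)) ≤ K * R ∧ (∏ j, (q.2 j : ℝ)) ≤ K * R ∧
          (Set.range q.1 ∩ Set.range q.2).ncard = r} : ℝ)
        ≤ ((Ufin p r w K R).card : ℝ) :=
    Nat.cast_le.2 (stepI p r w K R (le_of_lt hKR))
  have s2 : ((Ufin p r w K R).card : ℝ) ≤
      ∑ b ∈ Bset ×ˢ Bset,
        (((Fintype.piFinset fun _ : Fin r => Finset.Icc 1 w).filter
          (fun f => (∏ j, (f j : ℝ))^2 * ((∏ j, (b.1 j : ℝ)) * (∏ j, (b.2 j : ℝ)))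
            ≤ (K*R)^2)).card : ℝ) := by
    have := stepII p r w K R
    calc ((Ufin p r w K R).card : ℝ) ≤ _ := Nat.cast_le.2 this
      _ = _ := Nat.cast_sum _ _
  have s3 : ∑ b ∈ Bset ×ˢ Bset,
        (((Fintype.piFinset fun _ : Fin r => Finset.Icc 1 w).filter
          (fun f => (∏ j, (f j : ℝ))^2 * ((∏ j, (b.1 j : ℝ)) * (∏ j, (b.2 j : ℝ)))
            ≤ (K*R)^2)).card : ℝ)
      ≤ ∑ b ∈ Bset ×ˢ Bset,
          (K * R / Real.sqrt ((∏ j, (b.1 j : ℝ)) * (∏ j, (b.2 j : ℝ)))) * L^(r-1) := by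
    apply Finset.sum_le_sum
    intro b hb
    rw [Finset.mem_product] at hb
    have hb1 : ∀ j, 1 ≤ b.1 j := fun j =>
      (Finset.mem_Icc.1 ((Fintype.mem_piFinset).1 hb.1 j)).1
    have hb2 : ∀ j, 1 ≤ b.2 j := fun j =>
      (Finset.mem_Icc.1 ((Fintype.mem_piFinset).1 hb.2 j)).1
    have hPb : (1:ℝ) ≤ (∏ j, (b.1 j : ℝ)) * (∏ j, (b.2 j : ℝ)) :=
      one_le_mul_of_one_le_of_one_le (one_le_prod_cast hb1) (one_le_prod_cast hb2)
    exact inner_bound r w K R hKR _ hPb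
  -- sum evaluation
  have s4 : ∑ b ∈ Bset ×ˢ Bset,
        (K * R / Real.sqrt ((∏ j, (b.1 j : ℝ)) * (∏ j, (b.2 j : ℝ)))) * L^(r-1)
      = (K * R * L^(r-1)) *
        ∑ b ∈ Bset ×ˢ Bset,
          (∏ j, (Real.sqrt (b.1 j))⁻¹) * (∏ j, (Real.sqrt (b.2 j))⁻¹) := by
    rw [Finset.mul_sum]
    apply Finset.sum_congr rfl
    intro b hb
    have e : Real.sqrt ((∏ j, (b.1 j : ℝ)) * (∏ j, (b.2 j : ℝ)))
        = (∏ j, Real.sqrt (b.1 j)) * (∏ j, Real.sqrt (b.2 j)) := by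
      rw [Real.sqrt_mul (Finset.prod_nonneg fun j _ => by positivity),
        sqrt_prod _ _ (fun j _ => by positivity), sqrt_prod _ _ (fun j _ => by positivity)]
    rw [e, div_eq_mul_inv, mul_inv, Finset.prod_inv_distrib, Finset.prod_inv_distrib]
    ring
  have s5 : ∑ b ∈ Bset ×ˢ Bset,
        (∏ j, (Real.sqrt (b.1 j))⁻¹) * (∏ j, (Real.sqrt (b.2 j))⁻¹)
      = ((∑ g ∈ Bset, ∏ j, (Real.sqrt (g j))⁻¹))^2 := by
    rw [Finset.sum_product, sq, Finset.sum_mul_sum]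
  have s6 : ∑ g ∈ Bset, ∏ j, (Real.sqrt (g j))⁻¹
      = (∑ e ∈ Finset.Icc 1 w, (Real.sqrt e)⁻¹)^m := by
    have hps := Finset.prod_univ_sum (t := fun _ : Fin m => Finset.Icc 1 w)
      (f := fun (_ : Fin m) (e : ℕ) => (Real.sqrt e)⁻¹)
    rw [hBset, ← hps]
    simp [Finset.prod_const]
  have hSnn : (0:ℝ) ≤ ∑ e ∈ Finset.Icc 1 w, (Real.sqrt e)⁻¹ :=
    Finset.sum_nonneg fun e _ => by positivity
  have s7 : (∑ e ∈ Finset.Icc 1 w, (Real.sqrt e)⁻¹) ≤ 2 * Real.sqrt w := by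
    have := sum_rsqrt w
    simpa [one_div] using this
  have s8 : ((∑ e ∈ Finset.Icc 1 w, (Real.sqrt e)⁻¹)^m)^2 ≤ 4^m * (w:ℝ)^m := by
    have h1 : (∑ e ∈ Finset.Icc 1 w, (Real.sqrt e)⁻¹)^m ≤ (2 * Real.sqrt w)^m :=
      pow_le_pow_left₀ hSnn s7 m
    have h2 : ((∑ e ∈ Finset.Icc 1 w, (Real.sqrt e)⁻¹)^m)^2 ≤ ((2 * Real.sqrt w)^m)^2 :=
      pow_le_pow_left₀ (by positivity) h1 2
    have h3 : ((2 * Real.sqrt w)^m)^2 = 4^m * (w:ℝ)^m := by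
      rw [← pow_mul, mul_comm m 2, pow_mul, mul_pow, Real.sq_sqrt (by positivity : (0:ℝ) ≤ (w:ℝ))]
      rw [← mul_pow]
      norm_num
    linarith [h2, h3.le, h3.ge]
  have hLpow : L^(r-1) ≤ (cK * Real.log R)^(r-1) :=
    pow_le_pow_left₀ (by linarith) hLcK _
  calc (Nat.card {q : (Fin p → ℕ) × (Fin p → ℕ) //
          StrictMono q.1 ∧ StrictMono q.2 ∧
          (∀ j, 0 < q.1 j ∧ q.1 j ≤ w) ∧ (∀ j, 0 < q.2 j ∧ q.2 j ≤ w) ∧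
          (∏ j, (q.1 j : ℝ)) ≤ K * R ∧ (∏ j, (q.2 j : ℝ)) ≤ K * R ∧
          (Set.range q.1 ∩ Set.range q.2).ncard = r} : ℝ)
      ≤ ((Ufin p r w K R).card : ℝ) := s1
    _ ≤ _ := s2
    _ ≤ _ := s3
    _ = (K * R * L^(r-1)) * ∑ b ∈ Bset ×ˢ Bset,
          (∏ j, (Real.sqrt (b.1 j))⁻¹) * (∏ j, (Real.sqrt (b.2 j))⁻¹) := s4
    _ = (K * R * L^(r-1)) * ((∑ e ∈ Finset.Icc 1 w, (Real.sqrt e)⁻¹)^m)^2 := by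
        rw [s5, s6]
    _ ≤ (K * R * L^(r-1)) * (4^m * (w:ℝ)^m) := by
        apply mul_le_mul_of_nonneg_left s8
        have : (0:ℝ) ≤ L^(r-1) := by positivity
        positivity
    _ ≤ (K * R * (cK * Real.log R)^(r-1)) * (4^m * (w:ℝ)^m) := by
        apply mul_le_mul_of_nonneg_right (mul_le_mul_of_nonneg_left hLpow (by positivity))
        positivity
    _ = 4^m * K * cK^(r-1) * R * (w:ℝ)^m * (Real.log R)^(r-1) := by
        rw [mul_pow]; ring
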